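/- Total intention-to-treat decomposition: under Assumptions 1 and 2, E[Y | Z_i=1, Z_j=1] − E[Y | Z_i=0, Z_j=0] = E[(Y(1,0)−Y(0,0)) · 1_{(SC_i ∪ C_i ∪ GC_i) ∩ NT_j}] + E[(Y(1,1)−Y(1,0)) · 1_{AT_i ∩ (SC_j ∪ C_j ∪ GC_j)}] + E[(Y(0,1)−Y(0,0)) · 1_{NT_i ∩ (SC_j ∪ C_j ∪ GC_j)}] + E[(Y(1,1)−Y(0,1)) · 1_{(SC_i ∪ C_i ∪ GC_i) ∩ AT_j}] + E[(Y(1,1)−Y(0,0)) · 1_{(SC_i ∪ C_i ∪ GC_i) ∩ (SC_j ∪ C_j ∪ GC_j)}], where 1_A denotes the indicator of the event A. -/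

import Mathlib

open MeasureTheory ProbabilityTheory

noncomputable def bInd (b : Bool) : ℝ := if b then 1 else 0

private lemma int_mul_ind {Ω : Type*} [MeasurableSpace Ω] {P : Measure Ω} {f : Ω → ℝ}
    (hf : Integrable f P) {S : Set Ω} (hS : MeasurableSet S) :
    Integrable (fun ω => f ω * S.indicator (fun _ => (1:ℝ)) ω) P := by
  have h : (fun ω => f ω * S.indicator (fun _ => (1:ℝ)) ω) = S.indicator f := by
    funext ω
    by_cases hω : ω ∈ S
    · simp [Set.indicator_of_mem hω]
    · simp [Set.indicator_of_notMem hω]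
  rw [h]
  exact hf.indicator hS

set_option maxHeartbeats 2000000 in
private lemma ptwise (Yv : Bool → Bool → ℝ) (a0 a1 a2 a3 b0 b1 b2 b3 : Bool)
    (ha1 : a0 ≤ a1) (ha2 : a1 ≤ a2) (ha3 : a2 ≤ a3)
    (hb1 : b0 ≤ b1) (hb2 : b1 ≤ b2) (hb3 : b2 ≤ b3)
    (i1 i2 i3 i4 i5 : ℝ)
    (h1 : i1 = if (((a1 = true ∧ a0 = false) ∨ (a2 = true ∧ a1 = false)) ∨ (a3 = true ∧ a2 = false)) ∧ b3 = false then (1:ℝ) else 0)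
    (h2 : i2 = if a0 = true ∧ (((b1 = true ∧ b0 = false) ∨ (b2 = true ∧ b1 = false)) ∨ (b3 = true ∧ b2 = false)) then (1:ℝ) else 0)
    (h3 : i3 = if a3 = false ∧ (((b1 = true ∧ b0 = false) ∨ (b2 = true ∧ b1 = false)) ∨ (b3 = true ∧ b2 = false)) then (1:ℝ) else 0)
    (h4 : i4 = if (((a1 = true ∧ a0 = false) ∨ (a2 = true ∧ a1 = false)) ∨ (a3 = true ∧ a2 = false)) ∧ b0 = true then (1:ℝ) else 0)
    (h5 : i5 = if (((a1 = true ∧ a0 = false) ∨ (a2 = true ∧ a1 = false)) ∨ (a3 = true ∧ a2 = false)) ∧ (((b1 = true ∧ b0 = false) ∨ (b2 = true ∧ b1 = false)) ∨ (b3 = true ∧ b2 = false)) then (1:ℝ) else 0) :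
    Yv a3 b3 - Yv a0 b0 =
      (Yv true false - Yv false false) * i1
    + ((Yv true true - Yv true false) * i2
    + ((Yv false true - Yv false false) * i3
    + ((Yv true true - Yv false true) * i4
    + (Yv true true - Yv false false) * i5))) := by
  subst h1 h2 h3 h4 h5
  cases a0 <;> cases a1 <;> cases a2 <;> cases a3 <;> cases b0 <;> cases b1 <;> cases b2 <;> cases b3 <;>
    simp_all [Bool.le_iff_imp]

private lemma step1
    {Ω : Type*} [MeasurableSpace Ω] (P : Measure Ω) [IsProbabilityMeasure P]
    (Y : Bool → Bool → Ω → ℝ) (Di Dj : Bool → Bool → Ω → Bool)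
    (Zi Zj : Ω → Bool)
    (hYmeas : ∀ d d', Measurable (Y d d'))
    (hYint : ∀ d d', Integrable (Y d d') P)
    (hDimeas : ∀ z z', Measurable (Di z z'))
    (hDjmeas : ∀ z z', Measurable (Dj z z'))
    (hZi : Measurable Zi) (hZj : Measurable Zj)
    (hpos : ∀ z z', 0 < P ({x | Zi x = z} ∩ {x | Zj x = z'}))
    (hIV : IndepFun
      (fun ω => ((fun d d' => Y d d' ω),
                 (fun z z' => Di z z' ω),
                 (fun z z' => Dj z z' ω)))
      (fun ω => (Zi ω, Zj ω)) P)
    (z z' : Bool) :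
    (∫ ω, (Y (Di (Zi ω) (Zj ω) ω) (Dj (Zj ω) (Zi ω) ω) ω) ∂(P[|({x | Zi x = z} ∩ {x | Zj x = z'})]))
      = ∫ ω, Y (Di z z' ω) (Dj z' z ω) ω ∂P := by
  set A : Set Ω := {x | Zi x = z} ∩ {x | Zj x = z'} with hAdef
  have hA : MeasurableSet A :=
    (hZi (measurableSet_singleton z)).inter (hZj (measurableSet_singleton z'))
  set g : Ω → ℝ := fun ω => Y (Di z z' ω) (Dj z' z ω) ω with hgdef
  -- g as composition
  set φ : ((Bool → Bool → ℝ) × (Bool → Bool → Bool) × (Bool → Bool → Bool)) → ℝ :=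
    fun p => if p.2.1 z z' then (if p.2.2 z' z then p.1 true true else p.1 true false)
             else (if p.2.2 z' z then p.1 false true else p.1 false false) with hφdef
  have hφm : Measurable φ := by
    have e1 : Measurable fun p : ((Bool → Bool → ℝ) × (Bool → Bool → Bool) × (Bool → Bool → Bool)) => p.2.1 z z' :=
      (measurable_pi_apply z').comp ((measurable_pi_apply z).comp (measurable_fst.comp measurable_snd))
    have e2 : Measurable fun p : ((Bool → Bool → ℝ) × (Bool → Bool → Bool) × (Bool → Bool → Bool)) => p.2.2 z' z :=
      (measurable_pi_apply z).comp ((measurable_pi_apply z').comp (measurable_snd.comp measurable_snd))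
    have ey : ∀ b b', Measurable fun p : ((Bool → Bool → ℝ) × (Bool → Bool → Bool) × (Bool → Bool → Bool)) => p.1 b b' :=
      fun b b' => (measurable_pi_apply b').comp ((measurable_pi_apply b).comp measurable_fst)
    exact Measurable.ite (e1 (measurableSet_singleton true))
      (Measurable.ite (e2 (measurableSet_singleton true)) (ey true true) (ey true false))
      (Measurable.ite (e2 (measurableSet_singleton true)) (ey false true) (ey false false))
  have hT : Measurable (fun ω => ((fun d d' => Y d d' ω),
                 (fun z z' => Di z z' ω), (fun z z' => Dj z z' ω))) :=
    Measurable.prod (measurable_pi_lambda _ fun d => measurable_pi_lambda _ fun d' => hYmeas d d')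
      (Measurable.prod (measurable_pi_lambda _ fun a => measurable_pi_lambda _ fun b => hDimeas a b)
        (measurable_pi_lambda _ fun a => measurable_pi_lambda _ fun b => hDjmeas a b))
  have hgeq : g = φ ∘ (fun ω => ((fun d d' => Y d d' ω),
                 (fun z z' => Di z z' ω), (fun z z' => Dj z z' ω))) := by
    funext ω
    simp only [hgdef, hφdef, Function.comp_apply]
    cases h1 : Di z z' ω <;> cases h2 : Dj z' z ω <;> simp
  have hgm : Measurable g := by rw [hgeq]; exact hφm.comp hT
  have hgint : Integrable g P := by
    refine Integrable.mono' ((((hYint true true).abs.add (hYint true false).abs).add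
      (hYint false true).abs).add (hYint false false).abs) hgm.aestronglyMeasurable ?_
    refine Filter.Eventually.of_forall fun ω => ?_
    have key : ∀ b b' : Bool, |Y b b' ω| ≤ |Y true true ω| + |Y true false ω| + |Y false true ω| + |Y false false ω| := by
      intro b b'
      cases b <;> cases b' <;>
        nlinarith [abs_nonneg (Y true true ω), abs_nonneg (Y true false ω),
          abs_nonneg (Y false true ω), abs_nonneg (Y false false ω)]
    calc ‖g ω‖ = |Y (Di z z' ω) (Dj z' z ω) ω| := Real.norm_eq_abs _
      _ ≤ _ := key _ _
  -- indicator function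
  set ψ : Bool × Bool → ℝ := fun p => if p = (z, z') then 1 else 0 with hψdef
  have hψm : Measurable ψ :=
    Measurable.ite (measurableSet_singleton (z, z')) measurable_const measurable_const
  have hZm : Measurable (fun ω => (Zi ω, Zj ω)) := hZi.prodMk hZj
  have hψZeq : (fun ω => ψ (Zi ω, Zj ω)) = A.indicator (fun _ => (1:ℝ)) := by
    funext ω
    by_cases hω : ω ∈ A
    · have h1 : Zi ω = z := hω.1
      have h2 : Zj ω = z' := hω.2
      simp [hψdef, Prod.ext_iff, h1, h2, Set.indicator_of_mem hω]
    · have hne : ¬ ((Zi ω, Zj ω) = (z, z')) := by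
        intro h; exact hω ⟨congrArg Prod.fst h, congrArg Prod.snd h⟩
      simp [hψdef, hne, Set.indicator_of_notMem hω]
  have hψZint : Integrable (fun ω => ψ (Zi ω, Zj ω)) P := by
    rw [hψZeq]; exact (integrable_const (1:ℝ)).indicator hA
  have hindep : IndepFun g (fun ω => ψ (Zi ω, Zj ω)) P := by
    rw [hgeq]
    exact hIV.comp hφm hψm
  have hmul : ∫ ω, g ω * ψ (Zi ω, Zj ω) ∂P = (∫ ω, g ω ∂P) * (P A).toReal := by
    have := hindep.integral_mul_eq_mul_integral hgint.aestronglyMeasurable hψZint.aestronglyMeasurable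
    have h2 : ∫ ω, ψ (Zi ω, Zj ω) ∂P = (P A).toReal := by
      rw [hψZeq, integral_indicator_const (1:ℝ) hA]; simp [Measure.real]
    calc ∫ ω, g ω * ψ (Zi ω, Zj ω) ∂P
        = ∫ ω, (g * fun ω => ψ (Zi ω, Zj ω)) ω ∂P := rfl
      _ = (∫ ω, g ω ∂P) * ∫ ω, ψ (Zi ω, Zj ω) ∂P := this
      _ = (∫ ω, g ω ∂P) * (P A).toReal := by rw [h2]
  -- now compute the conditional integral
  have hAne : P A ≠ 0 := (hpos z z').ne'
  have hAfin : P A ≠ ⊤ := (measure_lt_top P A).ne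
  rw [ProbabilityTheory.cond, integral_smul_measure]
  have hres : ∫ ω in A, (Y (Di (Zi ω) (Zj ω) ω) (Dj (Zj ω) (Zi ω) ω) ω) ∂P = ∫ ω in A, g ω ∂P := by
    refine setIntegral_congr_fun hA fun x hx => ?_
    obtain ⟨h1, h2⟩ := hx
    simp only [Set.mem_setOf_eq] at h1 h2
    simp [hgdef, h1, h2]
  have hresind : ∫ ω in A, g ω ∂P = ∫ ω, g ω * ψ (Zi ω, Zj ω) ∂P := by
    rw [← integral_indicator hA]
    congr 1
    funext ω
    by_cases hω : ω ∈ A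
    · have h1 : ψ (Zi ω, Zj ω) = 1 := by
        rw [congrFun hψZeq ω, Set.indicator_of_mem hω]
      simp [Set.indicator_of_mem hω, h1]
    · have h1 : ψ (Zi ω, Zj ω) = 0 := by
        rw [congrFun hψZeq ω, Set.indicator_of_notMem hω]
      simp [Set.indicator_of_notMem hω, h1]
  rw [hres, hresind, hmul]
  rw [ENNReal.toReal_inv]
  rw [smul_eq_mul]
  field_simp [ENNReal.toReal_ne_zero.mpr ⟨hAne, hAfin⟩]

private lemma comb_int {Ω : Type*} [MeasurableSpace Ω] (P : Measure Ω) [IsProbabilityMeasure P]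
    (Y : Bool → Bool → Ω → ℝ) (Di Dj : Bool → Bool → Ω → Bool)
    (hYmeas : ∀ d d', Measurable (Y d d'))
    (hYint : ∀ d d', Integrable (Y d d') P)
    (hDimeas : ∀ z z', Measurable (Di z z'))
    (hDjmeas : ∀ z z', Measurable (Dj z z'))
    (z z' : Bool) :
    Integrable (fun ω => Y (Di z z' ω) (Dj z' z ω) ω) P := by
  have hgm : Measurable (fun ω => Y (Di z z' ω) (Dj z' z ω) ω) := by
    have heq : (fun ω => Y (Di z z' ω) (Dj z' z ω) ω) = fun ω =>
        if Di z z' ω then (if Dj z' z ω then Y true true ω else Y true false ω)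
        else (if Dj z' z ω then Y false true ω else Y false false ω) := by
      funext ω
      cases h1 : Di z z' ω <;> cases h2 : Dj z' z ω <;> simp [h1, h2]
    rw [heq]
    exact Measurable.ite (hDimeas z z' (measurableSet_singleton true))
      (Measurable.ite (hDjmeas z' z (measurableSet_singleton true)) (hYmeas _ _) (hYmeas _ _))
      (Measurable.ite (hDjmeas z' z (measurableSet_singleton true)) (hYmeas _ _) (hYmeas _ _))
  refine Integrable.mono' ((((hYint true true).abs.add (hYint true false).abs).add
    (hYint false true).abs).add (hYint false false).abs) hgm.aestronglyMeasurable ?_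
  refine Filter.Eventually.of_forall fun ω => ?_
  have key : ∀ b b' : Bool, |Y b b' ω| ≤ |Y true true ω| + |Y true false ω| + |Y false true ω| + |Y false false ω| := by
    intro b b'
    cases b <;> cases b' <;>
      nlinarith [abs_nonneg (Y true true ω), abs_nonneg (Y true false ω),
        abs_nonneg (Y false true ω), abs_nonneg (Y false false ω)]
  calc ‖Y (Di z z' ω) (Dj z' z ω) ω‖ = |Y (Di z z' ω) (Dj z' z ω) ω| := Real.norm_eq_abs _
    _ ≤ _ := key _ _

set_option maxHeartbeats 2000000 in
theorem stmt_4
    {Ω : Type*} [MeasurableSpace Ω] (P : Measure Ω) [IsProbabilityMeasure P]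
    (Y : Bool → Bool → Ω → ℝ) (Di Dj : Bool → Bool → Ω → Bool)
    (Zi Zj : Ω → Bool)
    (hYmeas : ∀ d d', Measurable (Y d d'))
    (hYint : ∀ d d', Integrable (Y d d') P)
    (hDimeas : ∀ z z', Measurable (Di z z'))
    (hDjmeas : ∀ z z', Measurable (Dj z z'))
    (hZi : Measurable Zi) (hZj : Measurable Zj)
    (hpos : ∀ z z', 0 < P ({x | Zi x = z} ∩ {x | Zj x = z'}))
    (hIV : IndepFun
      (fun ω => ((fun d d' => Y d d' ω),
                 (fun z z' => Di z z' ω),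
                 (fun z z' => Dj z z' ω)))
      (fun ω => (Zi ω, Zj ω)) P)
    (hmono : ∀ᵐ ω ∂P,
      (Di false false ω ≤ Di false true ω ∧ Di false true ω ≤ Di true false ω ∧
        Di true false ω ≤ Di true true ω) ∧
      (Dj false false ω ≤ Dj false true ω ∧ Dj false true ω ≤ Dj true false ω ∧
        Dj true false ω ≤ Dj true true ω))
    :
    (∫ ω, (Y (Di (Zi ω) (Zj ω) ω) (Dj (Zj ω) (Zi ω) ω) ω) ∂(P[|({x | Zi x = true} ∩ {x | Zj x = true})])) - (∫ ω, (Y (Di (Zi ω) (Zj ω) ω) (Dj (Zj ω) (Zi ω) ω) ω) ∂(P[|({x | Zi x = false} ∩ {x | Zj x = false})]))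
    = (∫ ω, (Y true false ω - Y false false ω) * Set.indicator (({x | Di false true x = true ∧ Di false false x = false} ∪ {x | Di true false x = true ∧ Di false true x = false} ∪ {x | Di true true x = true ∧ Di true false x = false}) ∩ {x | Dj true true x = false}) (fun _ => (1:ℝ)) ω ∂P)
      + (∫ ω, (Y true true ω - Y true false ω) * Set.indicator ({x | Di false false x = true} ∩ ({x | Dj false true x = true ∧ Dj false false x = false} ∪ {x | Dj true false x = true ∧ Dj false true x = false} ∪ {x | Dj true true x = true ∧ Dj true false x = false})) (fun _ => (1:ℝ)) ω ∂P)
      + (∫ ω, (Y false true ω - Y false false ω) * Set.indicator ({x | Di true true x = false} ∩ ({x | Dj false true x = true ∧ Dj false false x = false} ∪ {x | Dj true false x = true ∧ Dj false true x = false} ∪ {x | Dj true true x = true ∧ Dj true false x = false})) (fun _ => (1:ℝ)) ω ∂P)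
      + (∫ ω, (Y true true ω - Y false true ω) * Set.indicator (({x | Di false true x = true ∧ Di false false x = false} ∪ {x | Di true false x = true ∧ Di false true x = false} ∪ {x | Di true true x = true ∧ Di true false x = false}) ∩ {x | Dj false false x = true}) (fun _ => (1:ℝ)) ω ∂P)
      + (∫ ω, (Y true true ω - Y false false ω) * Set.indicator (({x | Di false true x = true ∧ Di false false x = false} ∪ {x | Di true false x = true ∧ Di false true x = false} ∪ {x | Di true true x = true ∧ Di true false x = false}) ∩ ({x | Dj false true x = true ∧ Dj false false x = false} ∪ {x | Dj true false x = true ∧ Dj false true x = false} ∪ {x | Dj true true x = true ∧ Dj true false x = false})) (fun _ => (1:ℝ)) ω ∂P) := by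
  have hDiB : ∀ z z' b, MeasurableSet {x | Di z z' x = b} :=
    fun z z' b => hDimeas z z' (measurableSet_singleton b)
  have hDjB : ∀ z z' b, MeasurableSet {x | Dj z z' x = b} :=
    fun z z' b => hDjmeas z z' (measurableSet_singleton b)
  set Mi : Set Ω := ({x | Di false true x = true ∧ Di false false x = false} ∪ {x | Di true false x = true ∧ Di false true x = false} ∪ {x | Di true true x = true ∧ Di true false x = false}) with hMi
  set Mj : Set Ω := ({x | Dj false true x = true ∧ Dj false false x = false} ∪ {x | Dj true false x = true ∧ Dj false true x = false} ∪ {x | Dj true true x = true ∧ Dj true false x = false}) with hMj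
  have hMim : MeasurableSet Mi :=
    (((hDiB false true true).inter (hDiB false false false)).union
      ((hDiB true false true).inter (hDiB false true false))).union
      ((hDiB true true true).inter (hDiB true false false))
  have hMjm : MeasurableSet Mj :=
    (((hDjB false true true).inter (hDjB false false false)).union
      ((hDjB true false true).inter (hDjB false true false))).union
      ((hDjB true true true).inter (hDjB true false false))
  set t1 : Ω → ℝ := fun ω => (Y true false ω - Y false false ω) * Set.indicator (Mi ∩ {x | Dj true true x = false}) (fun _ => (1:ℝ)) ω with ht1
  set t2 : Ω → ℝ := fun ω => (Y true true ω - Y true false ω) * Set.indicator ({x | Di false false x = true} ∩ Mj) (fun _ => (1:ℝ)) ω with ht2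
  set t3 : Ω → ℝ := fun ω => (Y false true ω - Y false false ω) * Set.indicator ({x | Di true true x = false} ∩ Mj) (fun _ => (1:ℝ)) ω with ht3
  set t4 : Ω → ℝ := fun ω => (Y true true ω - Y false true ω) * Set.indicator (Mi ∩ {x | Dj false false x = true}) (fun _ => (1:ℝ)) ω with ht4
  set t5 : Ω → ℝ := fun ω => (Y true true ω - Y false false ω) * Set.indicator (Mi ∩ Mj) (fun _ => (1:ℝ)) ω with ht5
  have I1 : Integrable t1 P :=
    int_mul_ind ((hYint true false).sub (hYint false false)) (hMim.inter (hDjB true true false))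
  have I2 : Integrable t2 P :=
    int_mul_ind ((hYint true true).sub (hYint true false)) ((hDiB false false true).inter hMjm)
  have I3 : Integrable t3 P :=
    int_mul_ind ((hYint false true).sub (hYint false false)) ((hDiB true true false).inter hMjm)
  have I4 : Integrable t4 P :=
    int_mul_ind ((hYint true true).sub (hYint false true)) (hMim.inter (hDjB false false true))
  have I5 : Integrable t5 P :=
    int_mul_ind ((hYint true true).sub (hYint false false)) (hMim.inter hMjm)
  have h11 := comb_int P Y Di Dj hYmeas hYint hDimeas hDjmeas true true
  have h00 := comb_int P Y Di Dj hYmeas hYint hDimeas hDjmeas false false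
  rw [step1 P Y Di Dj Zi Zj hYmeas hYint hDimeas hDjmeas hZi hZj hpos hIV true true,
      step1 P Y Di Dj Zi Zj hYmeas hYint hDimeas hDjmeas hZi hZj hpos hIV false false]
  have esub : ∫ ω, (Y (Di true true ω) (Dj true true ω) ω - Y (Di false false ω) (Dj false false ω) ω) ∂P
      = (∫ ω, Y (Di true true ω) (Dj true true ω) ω ∂P) - ∫ ω, Y (Di false false ω) (Dj false false ω) ω ∂P :=
    integral_sub h11 h00
  rw [← esub]
  have EAE : ∫ ω, (Y (Di true true ω) (Dj true true ω) ω - Y (Di false false ω) (Dj false false ω) ω) ∂P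
      = ∫ ω, (t1 ω + (t2 ω + (t3 ω + (t4 ω + t5 ω)))) ∂P := by
    refine integral_congr_ae ?_
    filter_upwards [hmono] with ω hmo
    obtain ⟨⟨ha1, ha2, ha3⟩, hb1, hb2, hb3⟩ := hmo
    have it1 : Set.indicator (Mi ∩ {x | Dj true true x = false}) (fun _ => (1:ℝ)) ω = if (((Di false true ω = true ∧ Di false false ω = false) ∨ (Di true false ω = true ∧ Di false true ω = false)) ∨ (Di true true ω = true ∧ Di true false ω = false)) ∧ Dj true true ω = false then (1:ℝ) else 0 := by
      by_cases hc : (((Di false true ω = true ∧ Di false false ω = false) ∨ (Di true false ω = true ∧ Di false true ω = false)) ∨ (Di true true ω = true ∧ Di true false ω = false)) ∧ Dj true true ω = false <;>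
        simp [hMi, hMj, Set.indicator_apply, Set.mem_inter_iff, Set.mem_union, Set.mem_setOf_eq, hc]
    have it2 : Set.indicator ({x | Di false false x = true} ∩ Mj) (fun _ => (1:ℝ)) ω = if Di false false ω = true ∧ (((Dj false true ω = true ∧ Dj false false ω = false) ∨ (Dj true false ω = true ∧ Dj false true ω = false)) ∨ (Dj true true ω = true ∧ Dj true false ω = false)) then (1:ℝ) else 0 := by
      by_cases hc : Di false false ω = true ∧ (((Dj false true ω = true ∧ Dj false false ω = false) ∨ (Dj true false ω = true ∧ Dj false true ω = false)) ∨ (Dj true true ω = true ∧ Dj true false ω = false)) <;>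
        simp [hMi, hMj, Set.indicator_apply, Set.mem_inter_iff, Set.mem_union, Set.mem_setOf_eq, hc]
    have it3 : Set.indicator ({x | Di true true x = false} ∩ Mj) (fun _ => (1:ℝ)) ω = if Di true true ω = false ∧ (((Dj false true ω = true ∧ Dj false false ω = false) ∨ (Dj true false ω = true ∧ Dj false true ω = false)) ∨ (Dj true true ω = true ∧ Dj true false ω = false)) then (1:ℝ) else 0 := by
      by_cases hc : Di true true ω = false ∧ (((Dj false true ω = true ∧ Dj false false ω = false) ∨ (Dj true false ω = true ∧ Dj false true ω = false)) ∨ (Dj true true ω = true ∧ Dj true false ω = false)) <;>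
        simp [hMi, hMj, Set.indicator_apply, Set.mem_inter_iff, Set.mem_union, Set.mem_setOf_eq, hc]
    have it4 : Set.indicator (Mi ∩ {x | Dj false false x = true}) (fun _ => (1:ℝ)) ω = if (((Di false true ω = true ∧ Di false false ω = false) ∨ (Di true false ω = true ∧ Di false true ω = false)) ∨ (Di true true ω = true ∧ Di true false ω = false)) ∧ Dj false false ω = true then (1:ℝ) else 0 := by
      by_cases hc : (((Di false true ω = true ∧ Di false false ω = false) ∨ (Di true false ω = true ∧ Di false true ω = false)) ∨ (Di true true ω = true ∧ Di true false ω = false)) ∧ Dj false false ω = true <;>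
        simp [hMi, hMj, Set.indicator_apply, Set.mem_inter_iff, Set.mem_union, Set.mem_setOf_eq, hc]
    have it5 : Set.indicator (Mi ∩ Mj) (fun _ => (1:ℝ)) ω = if (((Di false true ω = true ∧ Di false false ω = false) ∨ (Di true false ω = true ∧ Di false true ω = false)) ∨ (Di true true ω = true ∧ Di true false ω = false)) ∧ (((Dj false true ω = true ∧ Dj false false ω = false) ∨ (Dj true false ω = true ∧ Dj false true ω = false)) ∨ (Dj true true ω = true ∧ Dj true false ω = false)) then (1:ℝ) else 0 := by
      by_cases hc : (((Di false true ω = true ∧ Di false false ω = false) ∨ (Di true false ω = true ∧ Di false true ω = false)) ∨ (Di true true ω = true ∧ Di true false ω = false)) ∧ (((Dj false true ω = true ∧ Dj false false ω = false) ∨ (Dj true false ω = true ∧ Dj false true ω = false)) ∨ (Dj true true ω = true ∧ Dj true false ω = false)) <;>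
        simp [hMi, hMj, Set.indicator_apply, Set.mem_inter_iff, Set.mem_union, Set.mem_setOf_eq, hc]
    exact ptwise (fun d d' => Y d d' ω) (Di false false ω) (Di false true ω) (Di true false ω)
      (Di true true ω) (Dj false false ω) (Dj false true ω) (Dj true false ω) (Dj true true ω)
      ha1 ha2 ha3 hb1 hb2 hb3 _ _ _ _ _ it1 it2 it3 it4 it5
  rw [EAE]
  have e5 : ∫ ω, (t4 ω + t5 ω) ∂P = (∫ ω, t4 ω ∂P) + ∫ ω, t5 ω ∂P := integral_add I4 I5
  have e4 : ∫ ω, (t3 ω + (t4 ω + t5 ω)) ∂P = (∫ ω, t3 ω ∂P) + ∫ ω, (t4 ω + t5 ω) ∂P :=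
    integral_add I3 (I4.add I5)
  have e3 : ∫ ω, (t2 ω + (t3 ω + (t4 ω + t5 ω))) ∂P = (∫ ω, t2 ω ∂P) + ∫ ω, (t3 ω + (t4 ω + t5 ω)) ∂P :=
    integral_add I2 (I3.add (I4.add I5))
  have e2 : ∫ ω, (t1 ω + (t2 ω + (t3 ω + (t4 ω + t5 ω)))) ∂P = (∫ ω, t1 ω ∂P) + ∫ ω, (t2 ω + (t3 ω + (t4 ω + t5 ω))) ∂P :=
    integral_add I1 (I2.add (I3.add (I4.add I5)))
  rw [e2, e3, e4, e5]
  ring
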